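/- Let n, N be positive integers, let z_1, …, z_n be pairwise distinct nonzero complex numbers, let λ_1, …, λ_N be real numbers and a_1, …, a_N be complex numbers, and let ℓ_0 ∈ {1, …, N} with a_{ℓ_0} = 0 and a_ℓ ≠ 0 for every ℓ ≠ ℓ_0; assume z_k ≠ a_ℓ for all k, ℓ. Assume that for every k = 1, …, n: ∑_{j ≠ k} 1/(z_k − z_j) + ∑_{ℓ=1}^N λ_ℓ/(z_k − a_ℓ) = 0. Set z* := 1/conj(z) for z ≠ 0. Then the points z_1*, …, z_n* satisfy, for every k = 1, …, n: ∑_{j ≠ k} 1/(z_k* − z_j*) + (−n + 1 − ∑_{ℓ=1}^N λ_ℓ)/z_k* + ∑_{ℓ=1, ℓ≠ℓ_0}^N λ_ℓ/(z_k* − a_ℓ*) = 0. -/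
import Mathlib

open Complex

private lemma inv_diff_eq' {c b : ℂ} (hc : c ≠ 0) (hb : b ≠ 0) (hcb : c ≠ b) :
    1 / (c⁻¹ - b⁻¹) = -(c^2) * (1 / (c - b)) + c := by
  have h1 : c⁻¹ - b⁻¹ ≠ 0 := by
    rw [inv_sub_inv hc hb]
    exact div_ne_zero (sub_ne_zero.mpr fun h => hcb h.symm) (mul_ne_zero hc hb)
  have h2 : c - b ≠ 0 := sub_ne_zero.mpr hcb
  have h3 : b - c ≠ 0 := sub_ne_zero.mpr fun h => hcb h.symm
  field_simp
  ring

theorem inverted_equilibrium_origin_charge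
    (n N : ℕ) (hn : 0 < n) (hN : 0 < N)
    (z : Fin n → ℂ) (hzinj : Function.Injective z) (hz0 : ∀ k, z k ≠ 0)
    (lam : Fin N → ℝ) (a : Fin N → ℂ) (l0 : Fin N)
    (hal0 : a l0 = 0) (ha0 : ∀ l, l ≠ l0 → a l ≠ 0) (hza : ∀ k l, z k ≠ a l)
    (heq : ∀ k, (∑ j ∈ Finset.univ.erase k, 1 / (z k - z j)) +
      (∑ l, (lam l : ℂ) / (z k - a l)) = 0) :
    ∀ k, (∑ j ∈ Finset.univ.erase k,
        1 / ((starRingEnd ℂ (z k))⁻¹ - (starRingEnd ℂ (z j))⁻¹)) +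
      (-(n : ℂ) + 1 - ∑ l, (lam l : ℂ)) / (starRingEnd ℂ (z k))⁻¹ +
      (∑ l ∈ Finset.univ.erase l0,
        (lam l : ℂ) / ((starRingEnd ℂ (z k))⁻¹ - (starRingEnd ℂ (a l))⁻¹)) = 0 := by
  intro k
  set c : Fin n → ℂ := fun j => starRingEnd ℂ (z j) with hc
  set b : Fin N → ℂ := fun l => starRingEnd ℂ (a l) with hb
  have hc0 : ∀ j, c j ≠ 0 := fun j h => hz0 j (by simpa [hc] using congrArg (starRingEnd ℂ) h)
  have hb0 : ∀ l, l ≠ l0 → b l ≠ 0 := fun l hl h =>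
    ha0 l hl (by simpa [hb] using congrArg (starRingEnd ℂ) h)
  have hcb : ∀ j l, c j ≠ b l := fun j l h =>
    hza j l (by simpa [hc, hb] using congrArg (starRingEnd ℂ) h)
  have hbl0 : b l0 = 0 := by simp [hb, hal0]
  have hck : ∀ j, j ≠ k → c k ≠ c j := fun j hj h =>
    hj (hzinj (show z k = z j by
      simpa [hc] using congrArg (starRingEnd ℂ) h)).symm
  -- conjugated equilibrium
  have heqc : (∑ j ∈ Finset.univ.erase k, 1 / (c k - c j)) +
      (∑ l, (lam l : ℂ) / (c k - b l)) = 0 := by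
    have h := congrArg (starRingEnd ℂ) (heq k)
    simpa [map_sum, map_div₀, map_sub, Complex.conj_ofReal, hc, hb] using h
  -- rewrite first sum
  have e1 : (∑ j ∈ Finset.univ.erase k, 1 / ((c k)⁻¹ - (c j)⁻¹)) =
      -(c k ^ 2) * (∑ j ∈ Finset.univ.erase k, 1 / (c k - c j)) +
      ((n : ℂ) - 1) * c k := by
    rw [Finset.sum_congr rfl (fun j hj =>
      inv_diff_eq' (hc0 k) (hc0 j) (hck j (Finset.mem_erase.1 hj).1)),
      Finset.sum_add_distrib, ← Finset.mul_sum, Finset.sum_const,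
      Finset.card_erase_of_mem (Finset.mem_univ k), Finset.card_univ, Fintype.card_fin,
      nsmul_eq_mul, Nat.cast_sub hn, Nat.cast_one]
  -- rewrite second sum
  have e2 : (∑ l ∈ Finset.univ.erase l0, (lam l : ℂ) / ((c k)⁻¹ - (b l)⁻¹)) =
      -(c k ^ 2) * (∑ l ∈ Finset.univ.erase l0, (lam l : ℂ) / (c k - b l)) +
      ((∑ l, (lam l : ℂ)) - (lam l0 : ℂ)) * c k := by
    have step : ∀ l ∈ Finset.univ.erase l0, (lam l : ℂ) / ((c k)⁻¹ - (b l)⁻¹) =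
        -(c k ^ 2) * ((lam l : ℂ) / (c k - b l)) + (lam l : ℂ) * c k := by
      intro l hl
      rw [div_eq_mul_one_div,
        inv_diff_eq' (hc0 k) (hb0 l (Finset.mem_erase.1 hl).1) (hcb k l)]
      ring
    rw [Finset.sum_congr rfl step, Finset.sum_add_distrib, ← Finset.mul_sum,
      ← Finset.sum_mul]
    congr 1
    rw [Finset.sum_erase_eq_sub (Finset.mem_univ l0)]
  have hsplit : (∑ l, (lam l : ℂ) / (c k - b l)) =
      (lam l0 : ℂ) / (c k) + ∑ l ∈ Finset.univ.erase l0, (lam l : ℂ) / (c k - b l) := by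
    rw [← Finset.add_sum_erase _ _ (Finset.mem_univ l0), hbl0, sub_zero]
  have hS1 : (∑ j ∈ Finset.univ.erase k, 1 / (c k - c j)) =
      -((lam l0 : ℂ) / (c k)) - ∑ l ∈ Finset.univ.erase l0, (lam l : ℂ) / (c k - b l) := by
    linear_combination heqc - hsplit
  have hmid : ((starRingEnd ℂ) (z k))⁻¹ = (c k)⁻¹ := rfl
  rw [e1, e2, hS1, hmid]
  have hk0 : c k ≠ 0 := hc0 k
  field_simp
  ring
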